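/- Let X be a real normed space, f₁, …, f_n : X → ℝ ∪ {+∞} proper convex functions, and f = max_k f_k. Then for every x with f(x) ∈ ℝ: ∂f(x) = ⋃ { ∂f_λ(x) : λ ∈ Δ_n, f_λ(x) = f(x) }, where f_λ = Σ_k λ_k f_k and ∂g(x) denotes the (exact) convex subdifferential. -/

import Mathlib

open Filter Topology

def IsConvexEFn {E : Type*} [AddCommGroup E] [Module ℝ E] (g : E → EReal) : Prop :=
  Convex ℝ {p : E × ℝ | g p.1 ≤ (p.2 : EReal)}

/-- Scalar multiplication with the conventions `0·(+∞) = +∞` and `0·(−∞) = 0`. -/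
noncomputable def smul0 (a : ℝ) (v : EReal) : EReal :=
  if a = 0 then (if v = ⊤ then ⊤ else 0) else (a : EReal) * v

/-- The `δ`-subdifferential of `g` at `x`: empty if `δ < 0` or `x ∉ dom g`.
For `δ = 0` this is the exact convex subdifferential. -/
def esubdiff {X : Type*} [NormedAddCommGroup X] [NormedSpace ℝ X]
    (g : X → EReal) (x : X) (δ : ℝ) : Set (X →L[ℝ] ℝ) :=
  {p | 0 ≤ δ ∧ g x ≠ ⊤ ∧ ∀ y, g x + ((p (y - x) : ℝ) : EReal) - (δ : EReal) ≤ g y}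

namespace Stmt10Aux

lemma coe_sum {ι : Type*} (s : Finset ι) (r : ι → ℝ) :
    ((∑ i ∈ s, r i : ℝ) : EReal) = ∑ i ∈ s, ((r i : ℝ) : EReal) := by
  induction s using Finset.cons_induction with
  | empty => simp
  | cons i s hi ih => rw [Finset.sum_cons, Finset.sum_cons, EReal.coe_add, ih]

lemma sum_ne_bot {ι : Type*} (s : Finset ι) (g : ι → EReal)
    (hb : ∀ i ∈ s, g i ≠ ⊥) : ∑ i ∈ s, g i ≠ ⊥ := by
  induction s using Finset.cons_induction with
  | empty => simp
  | cons i s hi ih =>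
    rw [Finset.sum_cons, Ne, EReal.add_eq_bot_iff]
    push_neg
    exact ⟨hb i (Finset.mem_cons_self i s), ih fun j hj => hb j (Finset.mem_cons_of_mem hj)⟩

lemma sum_eq_top {ι : Type*} (s : Finset ι) (g : ι → EReal)
    (hb : ∀ i ∈ s, g i ≠ ⊥) (ht : ∃ i ∈ s, g i = ⊤) : ∑ i ∈ s, g i = ⊤ := by
  classical
  obtain ⟨i, hi, hit⟩ := ht
  rw [← Finset.add_sum_erase s g hi, hit]
  exact EReal.top_add_of_ne_bot
    (sum_ne_bot _ _ fun j hj => hb j (Finset.mem_of_mem_erase hj))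

lemma smul0_coe (a r : ℝ) : smul0 a (r : EReal) = ((a * r : ℝ) : EReal) := by
  unfold smul0
  rcases eq_or_ne a 0 with h | h
  · simp [h]
  · rw [if_neg h, ← EReal.coe_mul]

lemma smul0_top {a : ℝ} (ha : 0 ≤ a) : smul0 a ⊤ = ⊤ := by
  unfold smul0
  rcases eq_or_ne a 0 with h | h
  · simp [h]
  · rw [if_neg h, EReal.mul_top_of_pos]
    exact_mod_cast lt_of_le_of_ne ha (Ne.symm h)

lemma smul0_ne_bot {a : ℝ} (ha : 0 ≤ a) {v : EReal} (hv : v ≠ ⊥) : smul0 a v ≠ ⊥ := by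
  induction v using EReal.rec with
  | bot => exact absurd rfl hv
  | coe r => rw [smul0_coe]; exact EReal.coe_ne_bot _
  | top => rw [smul0_top ha]; exact fun h => absurd h.symm bot_lt_top.ne

end Stmt10Aux

open Stmt10Aux in
/-- `∂f(x) = ⋃ {∂f_λ(x) : λ ∈ Δ_n, f_λ(x) = f(x)}` for
`f = max_k f_k` with `f(x)` finite. -/
theorem stmt10 {X : Type*} [NormedAddCommGroup X] [NormedSpace ℝ X]
    (n : ℕ) (hn : 0 < n) (f : Fin n → X → EReal)
    (hnb : ∀ k x, f k x ≠ ⊥) (hpr : ∀ k, ∃ x, f k x ≠ ⊤)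
    (hconv : ∀ k, IsConvexEFn (f k))
    (x : X) (hx₁ : (⨆ k, f k x) ≠ ⊤) (hx₂ : (⨆ k, f k x) ≠ ⊥) :
    esubdiff (fun z => ⨆ k, f k z) x 0 =
      ⋃ l ∈ {l : Fin n → ℝ | (∀ k, 0 ≤ l k) ∧ (∑ k, l k = 1) ∧
          (∑ k, smul0 (l k) (f k x)) = ⨆ k, f k x},
        esubdiff (fun z => ∑ k, smul0 (l k) (f k z)) x 0 := by
  classical
  haveI : Nonempty (Fin n) := ⟨⟨0, hn⟩⟩
  -- the values at `x` are real
  have hFinx : ∀ k, ∃ a : ℝ, f k x = (a : EReal) := by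
    intro k
    have h1 : f k x ≤ ⨆ k, f k x := le_iSup (fun k => f k x) k
    have h2 : f k x ≠ ⊤ := fun h => hx₁ (top_le_iff.mp (h ▸ h1))
    exact ⟨(f k x).toReal, (EReal.coe_toReal h2 (hnb k x)).symm⟩
  choose a ha using hFinx
  set c : ℝ := (⨆ k, f k x).toReal with hcdef
  have hc : (⨆ k, f k x) = (c : EReal) := (EReal.coe_toReal hx₁ hx₂).symm
  have hac : ∀ k, a k ≤ c := by
    intro k
    have h := le_iSup (fun k => f k x) k
    rw [ha k, hc, EReal.coe_le_coe_iff] at h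
    exact h
  -- `f_λ ≤ max f` pointwise for `λ` in the simplex
  have key_le : ∀ (l : Fin n → ℝ), (∀ k, 0 ≤ l k) → (∑ k, l k = 1) → ∀ y,
      (∑ k, smul0 (l k) (f k y)) ≤ ⨆ k, f k y := by
    intro l hl0 hl1 y
    by_cases htop : ∃ k, f k y = ⊤
    · obtain ⟨k0, hk0⟩ := htop
      have h1 : (⊤ : EReal) ≤ ⨆ k, f k y := hk0 ▸ le_iSup (fun k => f k y) k0
      exact le_trans le_top h1
    · push_neg at htop
      have hr : ∀ k, ∃ r : ℝ, f k y = (r : EReal) := fun k =>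
        ⟨(f k y).toReal, (EReal.coe_toReal (htop k) (hnb k y)).symm⟩
      choose r hrr using hr
      obtain ⟨j, hj⟩ := Finite.exists_max r
      calc ∑ k, smul0 (l k) (f k y) = ((∑ k, l k * r k : ℝ) : EReal) := by
            rw [coe_sum]
            exact Finset.sum_congr rfl fun k _ => by rw [hrr k, smul0_coe]
        _ ≤ ((r j : ℝ) : EReal) := by
            rw [EReal.coe_le_coe_iff]
            calc ∑ k, l k * r k ≤ ∑ k, l k * r j :=
                  Finset.sum_le_sum fun k _ =>
                    mul_le_mul_of_nonneg_left (hj k) (hl0 k)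
              _ = r j := by rw [← Finset.sum_mul, hl1, one_mul]
        _ ≤ ⨆ k, f k y := (hrr j) ▸ le_iSup (fun k => f k y) j
  ext p
  simp only [esubdiff, Set.mem_setOf_eq, Set.mem_iUnion]
  constructor
  · rintro ⟨-, -, hsub0⟩
    have hsub : ∀ y, ((c + p (y - x) : ℝ) : EReal) ≤ ⨆ k, f k y := by
      intro y
      have h := hsub0 y
      rw [hc, EReal.coe_zero, sub_zero, ← EReal.coe_add] at h
      exact h
    -- the auxiliary convex sets in `Fin n → ℝ`
    set D : Set (Fin n → ℝ) :=
      {v | ∃ y : X, ∀ k, f k y ≤ ((v k + p (y - x) : ℝ) : EReal)} with hDdef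
    set U : Set (Fin n → ℝ) := {v | ∀ k, v k < c} with hUdef
    have hDconv : Convex ℝ D := by
      rintro v ⟨y, hy⟩ w ⟨z, hz⟩ s t hs ht hst
      refine ⟨s • y + t • z, fun k => ?_⟩
      have hmy : (y, v k + p (y - x)) ∈ {q : X × ℝ | f k q.1 ≤ (q.2 : EReal)} := hy k
      have hmz : (z, w k + p (z - x)) ∈ {q : X × ℝ | f k q.1 ≤ (q.2 : EReal)} := hz k
      have hS := (hconv k) hmy hmz hs ht hst
      have h2 : f k (s • y + t • z) ≤
          ((s * (v k + p (y - x)) + t * (w k + p (z - x)) : ℝ) : EReal) := by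
        simpa [Prod.smul_mk] using hS
      have hxx : s • y + t • z - x = s • (y - x) + t • (z - x) := by
        have hsx : s • x + t • x = x := by rw [← add_smul, hst, one_smul]
        calc s • y + t • z - x = s • y + t • z - (s • x + t • x) := by rw [hsx]
          _ = s • (y - x) + t • (z - x) := by rw [smul_sub, smul_sub]; abel
      have hpeq : p (s • y + t • z - x) = s * p (y - x) + t * p (z - x) := by
        rw [hxx, map_add, map_smul, map_smul, smul_eq_mul, smul_eq_mul]
      have heq : (s • v + t • w) k + p (s • y + t • z - x)
          = s * (v k + p (y - x)) + t * (w k + p (z - x)) := by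
        simp only [Pi.add_apply, Pi.smul_apply, smul_eq_mul, hpeq]
        ring
      rw [heq]
      exact h2
    have hUconv : Convex ℝ U := by
      have hU2 : U = ⋂ k, {v : Fin n → ℝ | v k < c} := by
        ext v; simp [hUdef, Set.mem_iInter]
      rw [hU2]
      exact convex_iInter fun k =>
        convex_halfSpace_lt ⟨fun _ _ => rfl, fun _ _ => rfl⟩ c
    have hUopen : IsOpen U := by
      have hU2 : U = ⋂ k, {v : Fin n → ℝ | v k < c} := by
        ext v; simp [hUdef, Set.mem_iInter]
      rw [hU2]
      exact isOpen_iInter_of_finite fun k =>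
        isOpen_lt (continuous_apply k) continuous_const
    have hdisj : Disjoint U D := by
      rw [Set.disjoint_left]
      rintro v hvU ⟨y, hy⟩
      obtain ⟨j, hj⟩ := Finite.exists_max v
      have h1 : (⨆ k, f k y) ≤ ((v j + p (y - x) : ℝ) : EReal) := by
        refine iSup_le fun k => le_trans (hy k) ?_
        rw [EReal.coe_le_coe_iff]
        have := hj k
        linarith
      have h2 := lt_of_le_of_lt (le_trans (hsub y) h1)
        (by rw [EReal.coe_lt_coe_iff]; have := hvU j; linarith :
          ((v j + p (y - x) : ℝ) : EReal) < ((c + p (y - x) : ℝ) : EReal))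
      exact absurd h2 (lt_irrefl _)
    obtain ⟨φ, u, hU, hD⟩ := geometric_hahn_banach_open hUconv hUopen hDconv hdisj
    set μ : Fin n → ℝ := fun k => φ (Pi.single k (1:ℝ)) with hμdef
    have hφ : ∀ v : Fin n → ℝ, φ v = ∑ k, v k * μ k := by
      intro v
      conv_lhs => rw [← Finset.univ_sum_single v]
      rw [map_sum]
      refine Finset.sum_congr rfl fun k _ => ?_
      have h1 : Pi.single k (v k) = v k • (Pi.single k 1 : Fin n → ℝ) := by
        rw [← Pi.single_smul, smul_eq_mul, mul_one]
      rw [h1, map_smul, smul_eq_mul]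
    -- the coefficients are nonnegative
    have hbase : (fun _ : Fin n => c - 1) ∈ U := fun k => by
      show c - 1 < c; linarith
    have hφb : φ (fun _ => c - 1) < u := hU _ hbase
    have hμ0 : ∀ k, 0 ≤ μ k := by
      intro k
      by_contra hneg
      push_neg at hneg
      set t : ℝ := (u - φ (fun _ => c - 1) + 1) / (-μ k) with htdef
      have ht : 0 < t := div_pos (by linarith) (by linarith)
      have hmem : (fun _ : Fin n => c - 1) - t • (Pi.single k 1 : Fin n → ℝ) ∈ U := by
        intro i
        simp only [Pi.sub_apply, Pi.smul_apply, Pi.single_apply, smul_eq_mul]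
        split_ifs with h
        · linarith
        · simp only [mul_zero, sub_zero]; linarith
      have hlt0 := hU _ hmem
      rw [map_sub, map_smul, smul_eq_mul] at hlt0
      have hlt : (φ fun _ => c - 1) - t * μ k < u := hlt0
      have hμne : μ k ≠ 0 := hneg.ne
      have htμ : t * μ k = -(u - φ (fun _ => c - 1) + 1) := by
        rw [htdef]
        field_simp [hμne]
      rw [htμ] at hlt
      linarith
    -- the sum of the coefficients is positive
    have hxD : (fun k => a k) ∈ D := by
      refine ⟨x, fun k => ?_⟩
      simp [ha k]
    have hu_le : u ≤ ∑ k, a k * μ k := by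
      have h := hD _ hxD
      rwa [hφ] at h
    have hlt_eps : ∀ ε : ℝ, 0 < ε → (c - ε) * (∑ k, μ k) < u := by
      intro ε hε
      have h := hU (fun _ => c - ε) (fun k => by show c - ε < c; linarith)
      rw [hφ] at h
      rw [Finset.mul_sum]
      exact h
    have hs0 : 0 ≤ ∑ k, μ k := Finset.sum_nonneg fun k _ => hμ0 k
    have hSpos : 0 < ∑ k, μ k := by
      rcases lt_or_eq_of_le hs0 with h | h
      · exact h
      · exfalso
        have hall : ∀ k ∈ Finset.univ, μ k = 0 :=
          (Finset.sum_eq_zero_iff_of_nonneg fun k _ => hμ0 k).mp h.symm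
        have h1 := hlt_eps 1 one_pos
        rw [← h] at h1
        have h2 : ∑ k, a k * μ k = 0 :=
          Finset.sum_eq_zero fun k hk => by rw [hall k hk, mul_zero]
        rw [h2] at hu_le
        simp at h1
        linarith
    set S := ∑ k, μ k with hSdef
    -- c * S ≤ u
    have hcs : c * S ≤ u := by
      by_contra h
      push_neg at h
      set ε : ℝ := (c * S - u) / (2 * S) with hεdef
      have hε : 0 < ε := div_pos (by linarith) (by linarith)
      have h2 := hlt_eps ε hε
      have h3 : ε * S = (c * S - u) / 2 := by
        rw [hεdef]; field_simp
      nlinarith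
    set l : Fin n → ℝ := fun k => μ k / S with hldef
    have hl0 : ∀ k, 0 ≤ l k := fun k => div_nonneg (hμ0 k) hs0
    have hl1 : ∑ k, l k = 1 := by
      rw [hldef]
      simp only
      rw [← Finset.sum_div, ← hSdef, div_self hSpos.ne']
    -- the main inequality
    have hmain : ∀ y, ((c + p (y - x) : ℝ) : EReal) ≤ ∑ k, smul0 (l k) (f k y) := by
      intro y
      by_cases htop : ∃ k, f k y = ⊤
      · obtain ⟨k0, hk0⟩ := htop
        rw [sum_eq_top Finset.univ _ (fun k _ => smul0_ne_bot (hl0 k) (hnb k y))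
          ⟨k0, Finset.mem_univ _, by rw [hk0]; exact smul0_top (hl0 k0)⟩]
        exact le_top
      · push_neg at htop
        have hr : ∀ k, ∃ r : ℝ, f k y = (r : EReal) := fun k =>
          ⟨(f k y).toReal, (EReal.coe_toReal (htop k) (hnb k y)).symm⟩
        choose r hrr using hr
        have hvD : (fun k => r k - p (y - x)) ∈ D := by
          refine ⟨y, fun k => ?_⟩
          rw [hrr k, EReal.coe_le_coe_iff]
          simp
        have h1 := hD _ hvD
        rw [hφ] at h1
        have h2 : ∑ k, (r k - p (y - x)) * μ k
            = (∑ k, r k * μ k) - p (y - x) * S := by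
          rw [hSdef, Finset.mul_sum, ← Finset.sum_sub_distrib]
          exact Finset.sum_congr rfl fun k _ => by ring
        rw [h2] at h1
        have h3 : (∑ k, smul0 (l k) (f k y)) = ((∑ k, l k * r k : ℝ) : EReal) := by
          rw [coe_sum]
          exact Finset.sum_congr rfl fun k _ => by rw [hrr k, smul0_coe]
        rw [h3, EReal.coe_le_coe_iff]
        have h4 : ∑ k, l k * r k = (∑ k, r k * μ k) / S := by
          rw [Finset.sum_div]
          exact Finset.sum_congr rfl fun k _ => by rw [hldef]; field_simp
        rw [h4, le_div_iff₀ hSpos]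
        nlinarith
    -- computing `f_λ x`
    have hfx : (∑ k, smul0 (l k) (f k x)) = ((∑ k, l k * a k : ℝ) : EReal) := by
      rw [coe_sum]
      exact Finset.sum_congr rfl fun k _ => by rw [ha k, smul0_coe]
    have hca : ∑ k, l k * a k = c := by
      have hle : ∑ k, l k * a k ≤ c := by
        calc ∑ k, l k * a k ≤ ∑ k, l k * c :=
              Finset.sum_le_sum fun k _ =>
                mul_le_mul_of_nonneg_left (hac k) (hl0 k)
          _ = c := by rw [← Finset.sum_mul, hl1, one_mul]
      have hge : c ≤ ∑ k, l k * a k := by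
        have h := hmain x
        rw [hfx, EReal.coe_le_coe_iff] at h
        simpa using h
      linarith
    have hact : (∑ k, smul0 (l k) (f k x)) = ⨆ k, f k x := by
      rw [hfx, hca, hc]
    refine ⟨l, ⟨hl0, hl1, hact⟩, le_refl 0, ?_, ?_⟩
    · rw [hfx]; exact EReal.coe_ne_top _
    · intro y
      rw [hfx, EReal.coe_zero, sub_zero, ← EReal.coe_add, hca]
      exact le_trans (hmain y) (le_refl _)
  · rintro ⟨l, ⟨hl0, hl1, hact⟩, -, -, hineq⟩
    refine ⟨le_refl 0, hx₁, fun y => ?_⟩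
    have h1 := hineq y
    rw [hact] at h1
    exact le_trans h1 (key_le l hl0 hl1 y)
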